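/- Let q, z ∈ ℂ with 0 < |q| < 1, z ≠ 0, and z ≠ q^k for every integer k. Then the series defining the inverted odd-order universal mock theta function, g₃(z⁻¹, q⁻¹) = ∑_{n=1}^∞ (q⁻¹)^{n(n-1)} / ((z⁻¹; q⁻¹)_n (z q⁻¹; q⁻¹)_n), converges and equals ∑_{n=1}^∞ q^n / ((z;q)_n (z⁻¹q;q)_n). -/

import Mathlib

/-- The finite q-Pochhammer symbol `(z;q)_n = ∏_{i=0}^{n-1} (1 - z q^i)`. -/
noncomputable def qPoch (z q : ℂ) (n : ℕ) : ℂ := ∏ i ∈ Finset.range n, (1 - z * q ^ i)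

lemma exp_neg_le_one_sub {x : ℝ} (hx : 0 ≤ x) (hx2 : x ≤ 1/2) :
    Real.exp (-(2*x)) ≤ 1 - x := by
  have h1 : (2*x) + 1 ≤ Real.exp (2*x) := Real.add_one_le_exp (2*x)
  have h2 : Real.exp (-(2*x)) * Real.exp (2*x) = 1 := by
    rw [← Real.exp_add]; ring_nf; exact Real.exp_zero
  nlinarith [Real.exp_pos (-(2*x)), Real.exp_pos (2*x),
    mul_nonneg hx (by linarith : (0:ℝ) ≤ 1 - 2*x)]

lemma qPoch_norm_lower (w q : ℂ) (hq1 : ‖q‖ < 1)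
    (hnz : ∀ i : ℕ, 1 - w * q ^ i ≠ 0) :
    ∃ c : ℝ, 0 < c ∧ ∀ n, c ≤ ‖qPoch w q n‖ := by
  set r := ‖q‖ with hr
  have hr0 : 0 ≤ r := norm_nonneg q
  set W := ‖w‖ with hW
  have hW0 : 0 ≤ W := norm_nonneg w
  obtain ⟨N, hN⟩ := exists_pow_lt_of_lt_one
    (show (0:ℝ) < 1/(2*(W+1)) by positivity) hq1
  have hsmall : ∀ i, N ≤ i → W * r ^ i ≤ 1/2 := by
    intro i hi
    have h1 : r ^ i ≤ r ^ N := pow_le_pow_of_le_one hr0 hq1.le hi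
    have h3 : W * (1/(2*(W+1))) ≤ 1/2 := by
      have he : W * (1/(2*(W+1))) = W/(2*(W+1)) := by ring
      rw [he, div_le_div_iff₀ (by positivity) (by norm_num)]
      linarith
    nlinarith [mul_le_mul_of_nonneg_left h1 hW0,
      mul_le_mul_of_nonneg_left hN.le hW0]
  set E := Real.exp (-(2 * W / (1 - r))) with hE
  have hE0 : 0 < E := Real.exp_pos _
  have hE1 : E ≤ 1 := by
    rw [hE, Real.exp_le_one_iff]
    have : 0 ≤ 2 * W / (1 - r) := div_nonneg (by positivity) (by linarith)
    linarith
  have habs : ∀ n, ‖qPoch w q n‖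
      = ∏ i ∈ Finset.range n, ‖1 - w * q ^ i‖ := by
    intro n; rw [qPoch, norm_prod]
  have hbpos : ∀ n, 0 < ‖qPoch w q n‖ := by
    intro n; rw [habs]
    exact Finset.prod_pos fun i _ => (norm_pos_iff.mpr (hnz i))
  have htail : ∀ n, N ≤ n →
      ‖qPoch w q N‖ * E ≤ ‖qPoch w q n‖ := by
    intro n hn
    have hsplit : ‖qPoch w q n‖
        = ‖qPoch w q N‖ * ∏ i ∈ Finset.Ico N n, ‖1 - w * q ^ i‖ := by
      rw [habs, habs, ← Finset.prod_range_mul_prod_Ico _ hn]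
    rw [hsplit]
    refine mul_le_mul_of_nonneg_left ?_ (hbpos N).le
    have hsum : ∑ i ∈ Finset.Ico N n, W * r ^ i ≤ W * (1-r)⁻¹ := by
      rw [← Finset.mul_sum]
      refine mul_le_mul_of_nonneg_left ?_ hW0
      calc ∑ i ∈ Finset.Ico N n, r ^ i ≤ ∑' i : ℕ, r ^ i :=
            Summable.sum_le_tsum _ (fun i _ => by positivity)
              (summable_geometric_of_lt_one hr0 hq1)
        _ = (1-r)⁻¹ := tsum_geometric_of_lt_one hr0 hq1
    calc E ≤ Real.exp (∑ i ∈ Finset.Ico N n, -(2 * (W * r ^ i))) := by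
          apply Real.exp_le_exp.2
          have hrew : ∑ i ∈ Finset.Ico N n, -(2 * (W * r ^ i))
              = -(2 * ∑ i ∈ Finset.Ico N n, W * r ^ i) := by
            rw [Finset.mul_sum, ← Finset.sum_neg_distrib]
          rw [hrew]
          have : 2 * W / (1 - r) = 2 * (W * (1-r)⁻¹) := by ring
          rw [this]
          have := hsum
          nlinarith
      _ = ∏ i ∈ Finset.Ico N n, Real.exp (-(2 * (W * r ^ i))) := Real.exp_sum _ _
      _ ≤ ∏ i ∈ Finset.Ico N n, ‖1 - w * q ^ i‖ := by
          refine Finset.prod_le_prod (fun i _ => (Real.exp_pos _).le) ?_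
          intro i hi
          have hi' : N ≤ i := (Finset.mem_Ico.1 hi).1
          refine (exp_neg_le_one_sub (by positivity) (hsmall i hi')).trans ?_
          have := norm_sub_norm_le (1 : ℂ) (w * q ^ i)
          simpa [norm_mul, norm_pow] using this
  have hne : (Finset.range (N+1)).Nonempty := Finset.nonempty_range_add_one
  refine ⟨((Finset.range (N+1)).inf' hne fun n => ‖qPoch w q n‖) * E,
    mul_pos ((Finset.lt_inf'_iff hne).2 fun n _ => hbpos n) hE0, ?_⟩
  intro n
  rcases le_or_gt n N with h | h
  · have h1 : (Finset.range (N+1)).inf' hne (fun n => ‖qPoch w q n‖)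
        ≤ ‖qPoch w q n‖ :=
      Finset.inf'_le _ (Finset.mem_range.2 (by omega))
    nlinarith [hbpos n, (Finset.lt_inf'_iff hne
      (f := fun n => ‖qPoch w q n‖) (a := 0)).2 fun m _ => hbpos m]
  · have h1 : (Finset.range (N+1)).inf' hne (fun n => ‖qPoch w q n‖)
        ≤ ‖qPoch w q N‖ :=
      Finset.inf'_le _ (Finset.mem_range.2 (by omega))
    exact (mul_le_mul_of_nonneg_right h1 hE0.le).trans (htail n h.le)

lemma qPoch_inv_key (q z : ℂ) (hq : q ≠ 0) (hz : z ≠ 0) (m : ℕ) :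
    qPoch z⁻¹ q⁻¹ m * qPoch (z * q⁻¹) q⁻¹ m * q ^ (m * m)
      = qPoch z q m * qPoch (z⁻¹ * q) q m := by
  induction m with
  | zero => simp [qPoch]
  | succ m ih =>
    have hstep : ∀ w p : ℂ, qPoch w p (m+1) = qPoch w p m * (1 - w * p ^ m) :=
      fun w p => Finset.prod_range_succ _ m
    rw [hstep, hstep, hstep, hstep]
    have hexp : (m+1)*(m+1) = m*m + (2*m+1) := by ring
    rw [hexp, pow_add]
    have hfac : (1 - z⁻¹ * (q⁻¹) ^ m) * (1 - z * q⁻¹ * (q⁻¹) ^ m) * q ^ (2*m+1)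
        = (1 - z * q ^ m) * (1 - z⁻¹ * q * q ^ m) := by
      rw [inv_pow]
      field_simp
      ring
    linear_combination (1 - z⁻¹ * (q⁻¹) ^ m) * (1 - z * q⁻¹ * (q⁻¹) ^ m) * q^(2*m+1) * ih
      + (qPoch z q m * qPoch (z⁻¹ * q) q m) * hfac


set_option maxHeartbeats 1000000 in
/-- For `0 < |q| < 1`, `z ≠ 0`, `z ≠ q^k` for all integers `k`, the series
defining the inverted odd-order universal mock theta function
`g₃(z⁻¹,q⁻¹) = ∑_{n=1}^∞ (q⁻¹)^{n(n-1)} / ((z⁻¹;q⁻¹)_n (z q⁻¹;q⁻¹)_n)` converges and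
equals `∑_{n=1}^∞ q^n / ((z;q)_n (z⁻¹q;q)_n)`. -/
theorem inverted_g3_eq (q z : ℂ)
    (hq0 : 0 < ‖q‖) (hq1 : ‖q‖ < 1)
    (hz0 : z ≠ 0) (hzq : ∀ k : ℤ, z ≠ q ^ k) :
    Summable (fun n : ℕ =>
      (q⁻¹) ^ ((n + 1) * n) / (qPoch z⁻¹ q⁻¹ (n + 1) * qPoch (z * q⁻¹) q⁻¹ (n + 1))) ∧
    (∑' n : ℕ,
        (q⁻¹) ^ ((n + 1) * n) / (qPoch z⁻¹ q⁻¹ (n + 1) * qPoch (z * q⁻¹) q⁻¹ (n + 1)))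
      = ∑' n : ℕ, q ^ (n + 1) / (qPoch z q (n + 1) * qPoch (z⁻¹ * q) q (n + 1)) := by
  have hq : q ≠ 0 := by
    intro h; rw [h] at hq0; simp at hq0
  -- nonvanishing of the factors
  have hz1 : ∀ i : ℕ, 1 - z * q ^ i ≠ 0 := by
    intro i h
    have h1 : z * q ^ i = 1 := by linear_combination -h
    have h2 : z = (q ^ i)⁻¹ := eq_inv_of_mul_eq_one_left h1
    refine hzq (-(i:ℤ)) ?_
    rw [zpow_neg, zpow_natCast]; exact h2
  have hz2 : ∀ i : ℕ, 1 - (z⁻¹ * q) * q ^ i ≠ 0 := by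
    intro i h
    have h1 : z⁻¹ * q ^ (i+1) = 1 := by
      rw [pow_succ']; linear_combination -h
    have h2 : z⁻¹ = (q ^ (i+1))⁻¹ := eq_inv_of_mul_eq_one_left h1
    have h3 : z = q ^ (i+1) := by
      have := congrArg Inv.inv h2; simpa using this
    refine hzq ((i:ℤ)+1) ?_
    rw [show ((i:ℤ)+1) = ((i+1:ℕ):ℤ) by push_cast; ring, zpow_natCast]; exact h3
  -- termwise identity
  have hterm : ∀ n : ℕ,
      (q⁻¹) ^ ((n + 1) * n) / (qPoch z⁻¹ q⁻¹ (n + 1) * qPoch (z * q⁻¹) q⁻¹ (n + 1))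
        = q ^ (n + 1) / (qPoch z q (n + 1) * qPoch (z⁻¹ * q) q (n + 1)) := by
    intro n
    have key := qPoch_inv_key q z hq hz0 (n+1)
    have hL : qPoch z⁻¹ q⁻¹ (n+1) * qPoch (z*q⁻¹) q⁻¹ (n+1)
        = (qPoch z q (n+1) * qPoch (z⁻¹*q) q (n+1)) / q ^ ((n+1)*(n+1)) := by
      rw [eq_div_iff (pow_ne_zero _ hq)]; exact key
    rw [hL, div_div_eq_mul_div]
    congr 1
    have hexp : (n+1)*(n+1) = (n+1)*n + (n+1) := by ring
    rw [hexp, pow_add, inv_pow, inv_mul_cancel_left₀ (pow_ne_zero _ hq)]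
  -- summability of the right-hand side
  obtain ⟨c1, hc1, hb1⟩ := qPoch_norm_lower z q hq1 hz1
  obtain ⟨c2, hc2, hb2⟩ := qPoch_norm_lower (z⁻¹ * q) q hq1 hz2
  have hsumR : Summable (fun n : ℕ =>
      q ^ (n + 1) / (qPoch z q (n + 1) * qPoch (z⁻¹ * q) q (n + 1))) := by
    apply Summable.of_norm
    apply Summable.of_nonneg_of_le (fun n => norm_nonneg _)
      (f := fun n => ((c1*c2)⁻¹ * ‖q‖) * ‖q‖ ^ n)
    · intro n
      have hnorm : ‖q ^ (n + 1) / (qPoch z q (n + 1) * qPoch (z⁻¹ * q) q (n + 1))‖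
          = ‖q‖ ^ (n+1)
            / (‖qPoch z q (n+1)‖ * ‖qPoch (z⁻¹*q) q (n+1)‖) := by
        rw [norm_div, norm_pow, norm_mul]
      rw [hnorm]
      have hden : c1 * c2 ≤ ‖qPoch z q (n+1)‖ * ‖qPoch (z⁻¹*q) q (n+1)‖ :=
        mul_le_mul (hb1 _) (hb2 _) hc2.le (norm_nonneg _)
      have h1 : ‖q‖ ^ (n+1)
            / (‖qPoch z q (n+1)‖ * ‖qPoch (z⁻¹*q) q (n+1)‖)
          ≤ ‖q‖ ^ (n+1) / (c1 * c2) :=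
        div_le_div_of_nonneg_left (by positivity) (mul_pos hc1 hc2) hden
      refine h1.trans (le_of_eq ?_)
      rw [pow_succ]
      field_simp
    · exact ((summable_geometric_of_lt_one (norm_nonneg q) hq1).mul_left _)
  have hfun : (fun n : ℕ =>
      (q⁻¹) ^ ((n + 1) * n) / (qPoch z⁻¹ q⁻¹ (n + 1) * qPoch (z * q⁻¹) q⁻¹ (n + 1)))
      = (fun n : ℕ => q ^ (n + 1) / (qPoch z q (n + 1) * qPoch (z⁻¹ * q) q (n + 1))) :=
    funext hterm
  rw [hfun]
  exact ⟨hsumR, rfl⟩
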